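/- arXiv:2403.10111 — 4 statements merged into one kernel-verified Lean document; each statement's English description precedes it below -/
import Mathlib

section
/- Additive strongly convex potentials satisfy Assumption (A3): suppose V is additive and satisfies (A2). Then for every j=1,…,d and every i with i,i+he_j∈𝒦_h one has κ₊(i,j) ≥ (σ²/h²)·exp(−(V_j^h(i_j+h)−V_j^h(i_j))/(2σ²))·(1−exp(−κh²/(2σ²))) > 0, and for every i with i,i−he_j∈𝒦_h one has κ₋(i,j) ≥ (σ²/h²)·exp(−(V_j^h(i_j−h)−V_j^h(i_j))/(2σ²))·(1−exp(−κh²/(2σ²))) > 0; in particular Assumption (A3) holds. -/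
open scoped BigOperators Classical RealInnerProductSpace
open Finset MeasureTheory

noncomputable section

/-- Points of the state space `ℝᵈ` with the Euclidean norm. -/
abbrev Pt (d : ℕ) : Type := EuclideanSpace ℝ (Fin d)

/-- The set `G` of moves `+_j`, `-_j`. -/
inductive Move (d : ℕ) : Type where
  | pos : Fin d → Move d
  | neg : Fin d → Move d
  deriving DecidableEq, Fintype

namespace Move

/-- The direction of a move. -/
def dir {d : ℕ} : Move d → Fin d
  | pos j => j
  | neg j => j

/-- Action of a move on `ℝᵈ`: `(±_j) x = x ± h eⱼ`. -/
def act {d : ℕ} (h : ℝ) : Move d → Pt d → Pt d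
  | pos j, x => x + EuclideanSpace.single j h
  | neg j, x => x - EuclideanSpace.single j h

end Move

/-- Action of a move in `G ∪ {e}` (`none` is the null move `e`). -/
def actO {d : ℕ} (h : ℝ) : Option (Move d) → Pt d → Pt d
  | none, x => x
  | some γ, x => γ.act h x

/-- The grid `𝒦_h` of cell centers, where `N = 2K/h`. -/
def grid (d : ℕ) (K h : ℝ) (N : ℕ) : Finset (Pt d) :=
  Finset.image
    (fun n : Fin d → Fin N =>
      (EuclideanSpace.equiv (Fin d) ℝ).symm fun j => -K + h * ((n j : ℕ) + 1) - h / 2)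
    Finset.univ

/-- The averaged potential `V^h`. -/
def Vh {d : ℕ} (h : ℝ) (V : Pt d → ℝ) (x : Pt d) : ℝ :=
  (1 / h ^ d) * ∫ s in {s : Pt d | ∀ j, s j ∈ Set.Icc (-(h / 2)) (h / 2)}, V (x + s)

/-- The one-dimensional averaged potential `V_j^h`. -/
def Vjh (h : ℝ) (W : ℝ → ℝ) (x : ℝ) : ℝ :=
  (1 / h) * ∫ s in Set.Icc (-(h / 2)) (h / 2), W (x + s)

/-- The transition rates `c(x, γ)`. -/
def rate (d : ℕ) (K h σ : ℝ) (N : ℕ) (V : Pt d → ℝ) (x : Pt d) (γ : Move d) : ℝ :=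
  if x ∈ grid d K h N ∧ γ.act h x ∈ grid d K h N then
    σ ^ 2 / h ^ 2 * Real.exp (-(Vh h V (γ.act h x) - Vh h V x) / (2 * σ ^ 2))
  else 0

/-- The generator `L_h`. -/
def gen (d : ℕ) (K h σ : ℝ) (N : ℕ) (V : Pt d → ℝ) (f : Pt d → ℝ) (i : Pt d) : ℝ :=
  ∑ γ : Move d, rate d K h σ N V i γ * (f (γ.act h i) - f i)

/-- The normalization constant `Z`. -/
def Znorm (d : ℕ) (K h σ : ℝ) (N : ℕ) (V : Pt d → ℝ) : ℝ :=
  ∑ k ∈ grid d K h N, Real.exp (-Vh h V k / σ ^ 2)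

/-- The invariant measure `m_h`. -/
def mh (d : ℕ) (K h σ : ℝ) (N : ℕ) (V : Pt d → ℝ) (i : Pt d) : ℝ :=
  Real.exp (-Vh h V i / σ ^ 2) / Znorm d K h σ N V

/-- `κ₊(i,j)`. -/
def kplus (d : ℕ) (K h σ : ℝ) (N : ℕ) (V : Pt d → ℝ) (i : Pt d) (j : Fin d) : ℝ :=
  rate d K h σ N V i (Move.pos j) - rate d K h σ N V ((Move.pos j).act h i) (Move.pos j)
    - ∑ γ ∈ Finset.univ.filter fun γ : Move d => γ.dir ≠ j,
        max (rate d K h σ N V ((Move.pos j).act h i) γ - rate d K h σ N V i γ) 0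

/-- `κ₋(i,j)`. -/
def kminus (d : ℕ) (K h σ : ℝ) (N : ℕ) (V : Pt d → ℝ) (i : Pt d) (j : Fin d) : ℝ :=
  rate d K h σ N V i (Move.neg j) - rate d K h σ N V ((Move.neg j).act h i) (Move.neg j)
    - ∑ γ ∈ Finset.univ.filter fun γ : Move d => γ.dir ≠ j,
        max (rate d K h σ N V ((Move.neg j).act h i) γ - rate d K h σ N V i γ) 0

/-- Assumption (A3). -/
def A3 (d : ℕ) (K h σ : ℝ) (N : ℕ) (V : Pt d → ℝ) : Prop :=
  (∀ j : Fin d, ∀ i ∈ grid d K h N, (Move.pos j).act h i ∈ grid d K h N →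
      0 < kplus d K h σ N V i j) ∧
  (∀ j : Fin d, ∀ i ∈ grid d K h N, (Move.neg j).act h i ∈ grid d K h N →
      0 < kminus d K h σ N V i j)

/-- `κ_φ = min {κ₊(i,j) + κ₋(i+heⱼ,j)}`. -/
def kappaPhi (d : ℕ) (K h σ : ℝ) (N : ℕ) (V : Pt d → ℝ) : ℝ :=
  sInf { r : ℝ | ∃ j : Fin d, ∃ i ∈ grid d K h N, (Move.pos j).act h i ∈ grid d K h N ∧
    r = kplus d K h σ N V i j + kminus d K h σ N V ((Move.pos j).act h i) j }

/-- The φ-entropy `H^φ(f | m_h)`. -/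
def entPhi (d : ℕ) (K h σ : ℝ) (N : ℕ) (V : Pt d → ℝ) (φ : ℝ → ℝ) (f : Pt d → ℝ) : ℝ :=
  ∑ i ∈ grid d K h N, φ (f i) * mh d K h σ N V i
    - φ (∑ i ∈ grid d K h N, f i * mh d K h σ N V i)

/-- The Dirichlet form `E(f,g)`. -/
def dirichlet (d : ℕ) (K h σ : ℝ) (N : ℕ) (V : Pt d → ℝ) (f g : Pt d → ℝ) : ℝ :=
  -∑ i ∈ grid d K h N, f i * gen d K h σ N V g i * mh d K h σ N V i

/-- Assumption (A1) on the entropy density `φ`. -/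
def A1 (φ : ℝ → ℝ) : Prop :=
  ContinuousOn φ (Set.Ici 0) ∧ (∀ x ∈ Set.Ici (0 : ℝ), 0 ≤ φ x) ∧
  ConvexOn ℝ (Set.Ici 0) φ ∧
  (∀ x ∈ Set.Ioi (0 : ℝ), DifferentiableAt ℝ φ x) ∧
  ContinuousOn (deriv φ) (Set.Ioi 0) ∧
  ConvexOn ℝ (Set.Ioi 0 ×ˢ Set.Ioi 0)
    (fun p : ℝ × ℝ => (deriv φ p.1 - deriv φ p.2) * (p.1 - p.2))

/-- φ is continuous, nonnegative and convex on `[0,∞)`, and C¹ on `(0,∞)`. -/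
def PhiRegular (φ : ℝ → ℝ) : Prop :=
  ContinuousOn φ (Set.Ici 0) ∧ (∀ x ∈ Set.Ici (0 : ℝ), 0 ≤ φ x) ∧
  ConvexOn ℝ (Set.Ici 0) φ ∧
  (∀ x ∈ Set.Ioi (0 : ℝ), DifferentiableAt ℝ φ x) ∧
  ContinuousOn (deriv φ) (Set.Ioi 0)

/-- `f^φ(x, y) = (φ'(f x) - φ'(f y)) (f x - f y)`. -/
def fphi {d : ℕ} (φ : ℝ → ℝ) (f : Pt d → ℝ) (x y : Pt d) : ℝ :=
  (deriv φ (f x) - deriv φ (f y)) * (f x - f y)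

/-- Coupling rates `𝐜(i, i+heⱼ, γ, γ̄)` for the neighboring pair `(i, i+heⱼ)`. -/
def crate (d : ℕ) (K h σ : ℝ) (N : ℕ) (V : Pt d → ℝ) (i : Pt d) (j : Fin d) :
    Option (Move d) → Option (Move d) → ℝ
  | some a, some b =>
      if a = b then min (rate d K h σ N V i a) (rate d K h σ N V ((Move.pos j).act h i) a)
      else if a = Move.pos j ∧ b.dir ≠ j then
        max (rate d K h σ N V ((Move.pos j).act h i) b - rate d K h σ N V i b) 0
      else if a.dir ≠ j ∧ b = Move.neg j then
        max (rate d K h σ N V i a - rate d K h σ N V ((Move.pos j).act h i) a) 0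
      else 0
  | some a, none => if a = Move.pos j then kplus d K h σ N V i j else 0
  | none, some b => if b = Move.neg j then kminus d K h σ N V ((Move.pos j).act h i) j else 0
  | none, none => 0

/-- Coupling rates `𝐜(i, δ i, γ, γ̄)` for an arbitrary move `δ ∈ G`. -/
def cpl (d : ℕ) (K h σ : ℝ) (N : ℕ) (V : Pt d → ℝ) (i : Pt d) (δ : Move d)
    (γ γb : Option (Move d)) : ℝ :=
  match δ with
  | Move.pos j => crate d K h σ N V i j γ γb
  | Move.neg j => crate d K h σ N V ((Move.neg j).act h i) j γb γ

/-- Synchronous coupling rates `𝐜(i, k, γ, γ̄)`. -/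
def syncRate (d : ℕ) (K h σ : ℝ) (N : ℕ) (V : Pt d → ℝ) (i k : Pt d) :
    Option (Move d) → Option (Move d) → ℝ
  | some a, some b => if a = b then min (rate d K h σ N V i a) (rate d K h σ N V k a) else 0
  | some a, none => max (rate d K h σ N V i a - rate d K h σ N V k a) 0
  | none, some b => max (rate d K h σ N V k b - rate d K h σ N V i b) 0
  | none, none => 0

/-- The graph (ℓ¹) distance. -/
def graphDist {d : ℕ} (x y : Pt d) : ℝ := ∑ j, |x j - y j|

/-- The generator matrix `Q`. -/
def Qmat (d : ℕ) (K h σ : ℝ) (N : ℕ) (V : Pt d → ℝ) :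
    Matrix {x // x ∈ grid d K h N} {x // x ∈ grid d K h N} ℝ := fun i k =>
  (∑ γ : Move d, if γ.act h i.1 = k.1 then rate d K h σ N V i.1 γ else 0)
    - (if i = k then ∑ γ : Move d, rate d K h σ N V i.1 γ else 0)

/-- The semigroup `S_t = e^{tQ}` acting on functions. -/
def St (d : ℕ) (K h σ : ℝ) (N : ℕ) (V : Pt d → ℝ) (t : ℝ) (f : Pt d → ℝ) (i : Pt d) : ℝ :=
  if hi : i ∈ grid d K h N then
    ∑ k : {x // x ∈ grid d K h N},
      NormedSpace.exp (t • Qmat d K h σ N V) ⟨i, hi⟩ k * f k.1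
  else 0

/-- The transition function `ν ↦ ν p_t` acting on measures. -/
def measPt (d : ℕ) (K h σ : ℝ) (N : ℕ) (V : Pt d → ℝ) (t : ℝ) (ν : Pt d → ℝ) (k : Pt d) : ℝ :=
  if hk : k ∈ grid d K h N then
    ∑ i : {x // x ∈ grid d K h N},
      ν i.1 * NormedSpace.exp (t • Qmat d K h σ N V) i ⟨k, hk⟩
  else 0

/-- `ν` is a probability measure on the grid. -/
def IsProbOn (d : ℕ) (K h : ℝ) (N : ℕ) (ν : Pt d → ℝ) : Prop :=
  (∀ x ∈ grid d K h N, 0 ≤ ν x) ∧ ∑ x ∈ grid d K h N, ν x = 1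

/-- Optimal transport cost between `ν` and `η` for the cost function `D`. -/
def Wgen (d : ℕ) (K h : ℝ) (N : ℕ) (D : Pt d → Pt d → ℝ) (ν η : Pt d → ℝ) : ℝ :=
  sInf { r : ℝ | ∃ γc : Pt d → Pt d → ℝ,
    (∀ x ∈ grid d K h N, ∀ y ∈ grid d K h N, 0 ≤ γc x y) ∧
    (∀ x ∈ grid d K h N, ∑ y ∈ grid d K h N, γc x y = ν x) ∧
    (∀ y ∈ grid d K h N, ∑ x ∈ grid d K h N, γc x y = η y) ∧
    r = ∑ x ∈ grid d K h N, ∑ y ∈ grid d K h N, D x y * γc x y }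

/-- The `L^p` Wasserstein distance w.r.t. the Euclidean distance. -/
def Wp (d : ℕ) (K h : ℝ) (N : ℕ) (p : ℝ) (ν η : Pt d → ℝ) : ℝ :=
  (Wgen d K h N (fun x y => ‖x - y‖ ^ p) ν η) ^ (1 / p)

/-- The `L¹` Wasserstein distance w.r.t. the Euclidean distance. -/
def W1 (d : ℕ) (K h : ℝ) (N : ℕ) (ν η : Pt d → ℝ) : ℝ :=
  Wgen d K h N (fun x y => ‖x - y‖) ν η

/-- The `L¹` Wasserstein distance w.r.t. the graph distance. -/
def Wd1 (d : ℕ) (K h : ℝ) (N : ℕ) (ν η : Pt d → ℝ) : ℝ :=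
  Wgen d K h N graphDist ν η

/-- The rescaling factor `𝒯 = 2 max_i Σ_γ c(i,γ)`. -/
def Tcal (d : ℕ) (K h σ : ℝ) (N : ℕ) (V : Pt d → ℝ) : ℝ :=
  2 * sSup ((fun i => ∑ γ : Move d, rate d K h σ N V i γ) '' (grid d K h N : Set (Pt d)))

/-- The time step `τ = 1/𝒯`. -/
def tauStep (d : ℕ) (K h σ : ℝ) (N : ℕ) (V : Pt d → ℝ) : ℝ :=
  1 / Tcal d K h σ N V

/-- The rescaled jump rates `p(i,γ) = c(i,γ)/𝒯`. -/
def prate (d : ℕ) (K h σ : ℝ) (N : ℕ) (V : Pt d → ℝ) (i : Pt d) (γ : Move d) : ℝ :=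
  rate d K h σ N V i γ / Tcal d K h σ N V

/-- The transition matrix `π` acting on functions: `(π f)(i) = Σ_k π(i,k) f(k)`. -/
def piStep (d : ℕ) (K h σ : ℝ) (N : ℕ) (V : Pt d → ℝ) (f : Pt d → ℝ) (i : Pt d) : ℝ :=
  f i + ∑ γ : Move d, prate d K h σ N V i γ * (f (γ.act h i) - f i)

/-- The entries `π(i,k)` of the transition matrix. -/
def piKernel (d : ℕ) (K h σ : ℝ) (N : ℕ) (V : Pt d → ℝ) (i k : Pt d) : ℝ :=
  (∑ γ : Move d, if γ.act h i = k then prate d K h σ N V i γ else 0)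
    + (if i = k then 1 - ∑ γ : Move d, prate d K h σ N V i γ else 0)

/-- The transition matrix `π` acting on measures: `(ν π)(k) = Σ_i ν(i) π(i,k)`. -/
def piMeas (d : ℕ) (K h σ : ℝ) (N : ℕ) (V : Pt d → ℝ) (ν : Pt d → ℝ) (k : Pt d) : ℝ :=
  if k ∈ grid d K h N then ∑ i ∈ grid d K h N, ν i * piKernel d K h σ N V i k else 0

/-- The Fisher information `F(f)`. -/
def fisher (d : ℕ) (K h σ : ℝ) (N : ℕ) (V : Pt d → ℝ) (φ : ℝ → ℝ) (f : Pt d → ℝ) : ℝ :=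
  (1 / 2) * ∑ i ∈ grid d K h N, ∑ γ : Move d,
    prate d K h σ N V i γ * (deriv φ (f (γ.act h i)) - deriv φ (f i))
      * (f (γ.act h i) - f i) * mh d K h σ N V i

/-- The entropy densities `φ_α` (with `φ₁(x) = x log x - x + 1`). -/
def phiAlpha (α : ℝ) (x : ℝ) : ℝ :=
  if α = 1 then x * Real.log x - x + 1 else (α - 1)⁻¹ * (x ^ α - x) - x + 1

/-- Assumption (A2): strong `κ`-convexity of `V` on `[-K,K]^d`. -/
def A2 (d : ℕ) (K : ℝ) (V : Pt d → ℝ) (κ : ℝ) : Prop :=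
  ∀ x y : Pt d, (∀ j, |x j| ≤ K) → (∀ j, |y j| ≤ K) →
    κ * ‖x - y‖ ^ 2 ≤ ⟪x - y, gradient V x - gradient V y⟫

/-- `V` is additive with components `Vs j`. -/
def IsAdditive (d : ℕ) (V : Pt d → ℝ) (Vs : Fin d → ℝ → ℝ) : Prop :=
  ∀ x : Pt d, V x = ∑ j, Vs j (x j)

/-- `∇V` is Lipschitz continuous with constant `L` on `[-K,K]^d`. -/
def GradLip (d : ℕ) (K : ℝ) (V : Pt d → ℝ) (L : ℝ) : Prop :=
  ∀ x y : Pt d, (∀ j, |x j| ≤ K) → (∀ j, |y j| ≤ K) →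
    ‖gradient V x - gradient V y‖ ≤ L * ‖x - y‖

/-- The basic assumptions on the discretization parameters. -/
def Params (d : ℕ) (K h σ : ℝ) (N : ℕ) (V : Pt d → ℝ) : Prop :=
  1 ≤ d ∧ 0 < K ∧ 0 < h ∧ (N : ℝ) * h = 2 * K ∧ 0 < σ ∧ ContDiff ℝ 2 V

/-- The discrete-time coupling `𝐩` for the neighboring pair `(i, i+heⱼ)`. -/
def pcoup (d : ℕ) (K h σ : ℝ) (N : ℕ) (V : Pt d → ℝ) (i : Pt d) (j : Fin d)
    (q : Option (Move d) × Option (Move d)) : ℝ :=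
  if q = (none, none) then
    1 - ∑ q' ∈ Finset.univ.filter
          (fun q' : Option (Move d) × Option (Move d) => q' ≠ (none, none)),
        crate d K h σ N V i j q'.1 q'.2 / Tcal d K h σ N V
  else crate d K h σ N V i j q.1 q.2 / Tcal d K h σ N V

end
open scoped BigOperators Classical RealInnerProductSpace
open Finset MeasureTheory

/-- coordinate grid predicate -/
def cg (K h : ℝ) (N : ℕ) (a : ℝ) : Prop := ∃ n : Fin N, a = -K + h * ((n:ℕ) + 1) - h / 2

lemma mem_grid_iff (d : ℕ) (K h : ℝ) (N : ℕ) (x : Pt d) :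
    x ∈ grid d K h N ↔ ∀ j, cg K h N (x j) := by
  constructor
  · intro hx j
    simp only [grid, Finset.mem_image] at hx
    obtain ⟨n, -, rfl⟩ := hx
    exact ⟨n j, rfl⟩
  · intro hx
    choose n hn using hx
    simp only [grid, Finset.mem_image]
    refine ⟨n, Finset.mem_univ _, ?_⟩
    ext j
    exact (hn j).symm

lemma cg_bounds (K h : ℝ) (N : ℕ) (hh : 0 < h) (hN : (N:ℝ) * h = 2*K) {a : ℝ}
    (ha : cg K h N a) : -K + h/2 ≤ a ∧ a ≤ K - h/2 := by
  obtain ⟨n, rfl⟩ := ha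
  have h1 : (1:ℝ) ≤ ((n:ℕ):ℝ) + 1 := by have : (0:ℝ) ≤ ((n:ℕ):ℝ) := Nat.cast_nonneg _; linarith
  have h2 : ((n:ℕ):ℝ) + 1 ≤ (N:ℝ) := by
    have := n.2
    exact_mod_cast this
  constructor
  · nlinarith
  · nlinarith

lemma act_pos_apply (d : ℕ) (h : ℝ) (k : Fin d) (x : Pt d) (m : Fin d) :
    ((Move.pos k).act h x) m = if m = k then x m + h else x m := by
  show x m + (EuclideanSpace.single k h) m = _
  rw [EuclideanSpace.single_apply]
  split <;> simp

lemma act_neg_apply (d : ℕ) (h : ℝ) (k : Fin d) (x : Pt d) (m : Fin d) :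
    ((Move.neg k).act h x) m = if m = k then x m - h else x m := by
  show x m - (EuclideanSpace.single k h) m = _
  rw [EuclideanSpace.single_apply]
  split <;> simp

open scoped BigOperators Classical RealInnerProductSpace
open Finset MeasureTheory

lemma Vh_eq_sum (d : ℕ) (hd : 0 < d) (h : ℝ) (hh : 0 < h) (V : Pt d → ℝ) (Vs : Fin d → ℝ → ℝ)
    (hVs : ∀ j, Continuous (Vs j)) (hadd : IsAdditive d V Vs) (x : Pt d) :
    Vh h V x = ∑ j, Vjh h (Vs j) (x j) := by
  classical
  set S : Set ℝ := Set.Icc (-(h/2)) (h/2) with hS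
  have hmp := (EuclideanSpace.volume_preserving_symm_measurableEquiv_toLp (Fin d)).symm
  have hemb := MeasurableEquiv.measurableEmbedding (MeasurableEquiv.toLp 2 (Fin d → ℝ))
  set f := (MeasurableEquiv.toLp 2 (Fin d → ℝ)) with hf
  have hfapp : ∀ (t : Fin d → ℝ) (j : Fin d), (f t) j = t j := fun t j => rfl
  have hpre : f ⁻¹' {s : Pt d | ∀ j, s j ∈ S} = Set.pi Set.univ (fun _ => S) := by
    ext t
    simp only [Set.mem_preimage, Set.mem_setOf_eq, hfapp, Set.mem_pi, Set.mem_univ, true_implies]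
  have step1 : (∫ s in {s : Pt d | ∀ j, s j ∈ S}, V (x + s)) =
      ∫ t in Set.pi Set.univ (fun _ => S), V (x + f t) := by
    rw [← hmp.setIntegral_preimage_emb hemb (fun s => V (x + s)), MeasurableEquiv.symm_symm, hpre]
  have hVxt : ∀ t : Fin d → ℝ, V (x + f t) = ∑ j, Vs j (x j + t j) := by
    intro t; rw [hadd]; exact Finset.sum_congr rfl (fun j _ => rfl)
  have hScompact : IsCompact (Set.pi Set.univ (fun _ : Fin d => S)) :=
    isCompact_univ_pi (fun _ => isCompact_Icc)
  have hSmeas : MeasurableSet (Set.pi Set.univ (fun _ : Fin d => S)) :=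
    MeasurableSet.univ_pi (fun _ => measurableSet_Icc)
  have step2 : (∫ t in Set.pi Set.univ (fun _ => S), V (x + f t)) =
      ∑ j, ∫ t in Set.pi Set.univ (fun _ : Fin d => S), Vs j (x j + t j) := by
    simp only [hVxt]
    exact integral_finset_sum _ (fun j _ =>
      (((hVs j).comp (continuous_const.add (continuous_apply j))).continuousOn.integrableOn_compact
        hScompact))
  have step3 : ∀ j : Fin d, (∫ t in Set.pi Set.univ (fun _ : Fin d => S), Vs j (x j + t j)) =
      (∫ u in S, Vs j (x j + u)) * h ^ (d - 1) := by
    intro j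
    have hind : ∀ t : Fin d → ℝ,
        (Set.pi Set.univ (fun _ : Fin d => S)).indicator (fun t => Vs j (x j + t j)) t =
        ∏ m, (if m = j then S.indicator (fun u => Vs j (x j + u)) (t m)
          else S.indicator (fun _ => (1:ℝ)) (t m)) := by
      intro t
      by_cases ht : t ∈ Set.pi Set.univ (fun _ : Fin d => S)
      · rw [Set.indicator_of_mem ht]
        have hmem : ∀ m, t m ∈ S := fun m => ht m (Set.mem_univ m)
        have : ∀ m, (if m = j then S.indicator (fun u => Vs j (x j + u)) (t m)
            else S.indicator (fun _ => (1:ℝ)) (t m)) =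
            (if m = j then Vs j (x j + t m) else 1) := by
          intro m
          have h1 : S.indicator (fun u => Vs j (x j + u)) (t m) = Vs j (x j + t m) :=
            Set.indicator_of_mem (hmem m) _
          have h2 : S.indicator (fun _ => (1:ℝ)) (t m) = 1 :=
            Set.indicator_of_mem (hmem m) _
          rw [h1, h2]
        rw [Finset.prod_congr rfl (fun m _ => this m),
          Finset.prod_ite_eq' Finset.univ j (fun m => Vs j (x j + t m)),
          if_pos (Finset.mem_univ j)]
      · rw [Set.indicator_of_notMem ht]
        obtain ⟨m, hm⟩ : ∃ m, t m ∉ S :=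
          not_forall.mp (fun hall => ht (fun m _ => hall m))
        refine (Finset.prod_eq_zero (Finset.mem_univ m) ?_).symm
        rcases eq_or_ne m j with rfl | hmj
        · rw [if_pos rfl]; exact Set.indicator_of_notMem hm _
        · rw [if_neg hmj]; exact Set.indicator_of_notMem hm _
    rw [← integral_indicator hSmeas]
    rw [show ((Set.pi Set.univ (fun _ : Fin d => S)).indicator (fun t => Vs j (x j + t j))) =
      fun t => ∏ m, (if m = j then S.indicator (fun u => Vs j (x j + u)) (t m)
          else S.indicator (fun _ => (1:ℝ)) (t m)) from funext hind]
    rw [MeasureTheory.volume_pi]; beta_reduce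
    rw [MeasureTheory.integral_fintype_prod_eq_prod
      (f := fun m u => if m = j then S.indicator (fun v => Vs j (x j + v)) u
        else S.indicator (fun _ => (1:ℝ)) u)]
    have hone : (∫ u, S.indicator (fun _ => (1:ℝ)) u) = h := by
      rw [integral_indicator measurableSet_Icc, setIntegral_const, smul_eq_mul, mul_one,
        Real.volume_real_Icc, show h / 2 - -(h/2) = h by ring, max_eq_left hh.le]
    have hval : ∀ m, (∫ u, if m = j then S.indicator (fun v => Vs j (x j + v)) u
        else S.indicator (fun _ => (1:ℝ)) u) =
        if m = j then (∫ u in S, Vs j (x j + u)) else h := by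
      intro m
      by_cases hm : m = j
      · simp only [hm, if_true]; rw [integral_indicator measurableSet_Icc]
      · simp only [hm, if_false]; exact hone
    rw [Finset.prod_congr rfl (fun m _ => hval m),
      ← Finset.mul_prod_erase Finset.univ _ (Finset.mem_univ j), if_pos rfl]
    congr 1
    rw [Finset.prod_congr rfl (fun m hm => if_neg (Finset.ne_of_mem_erase hm)),
      Finset.prod_const, Finset.card_erase_of_mem (Finset.mem_univ j), Finset.card_univ,
      Fintype.card_fin]
  have hpow : h ^ d = h * h ^ (d - 1) := by
    rw [← pow_succ']; congr 1; omega
  rw [Vh, step1, step2, Finset.sum_congr rfl (fun j _ => step3 j), Finset.mul_sum]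
  refine Finset.sum_congr rfl (fun j _ => ?_)
  rw [Vjh, hpow]
  have hne : h ≠ 0 := ne_of_gt hh
  have hpne : h ^ (d - 1) ≠ 0 := pow_ne_zero _ hne
  generalize (∫ u in S, Vs j (x j + u)) = I
  field_simp

open scoped BigOperators Classical RealInnerProductSpace
open Finset MeasureTheory

lemma gradient_coord (d : ℕ) (V : Pt d → ℝ) (Vs : Fin d → ℝ → ℝ)
    (hVs : ∀ j, ContDiff ℝ 2 (Vs j)) (hadd : IsAdditive d V Vs) (z : Pt d) (j : Fin d) :
    gradient V z j = deriv (Vs j) (z j) := by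
  have hder : HasFDerivAt V (∑ m, (deriv (Vs m) (z m)) • (EuclideanSpace.proj m :
      EuclideanSpace ℝ (Fin d) →L[ℝ] ℝ)) z := by
    have hV : V = fun x => ∑ m, Vs m (x m) := funext hadd
    rw [hV]
    apply HasFDerivAt.fun_sum
    intro m _
    have h1 : HasDerivAt (Vs m) (deriv (Vs m) (z m)) (z m) :=
      (((hVs m).differentiable (by norm_num)) (z m)).hasDerivAt
    have h2 : HasFDerivAt (fun x : Pt d => x m)
        (EuclideanSpace.proj m : EuclideanSpace ℝ (Fin d) →L[ℝ] ℝ) z :=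
      (EuclideanSpace.proj (𝕜 := ℝ) m).hasFDerivAt
    exact h1.comp_hasFDerivAt z h2
  have hfd : fderiv ℝ V z = ∑ m, (deriv (Vs m) (z m)) • (EuclideanSpace.proj m :
      EuclideanSpace ℝ (Fin d) →L[ℝ] ℝ) := hder.fderiv
  have key : gradient V z j = ⟪gradient V z, EuclideanSpace.single j (1:ℝ)⟫ := by
    rw [EuclideanSpace.inner_single_right]; simp
  rw [key, gradient, InnerProductSpace.toDual_symm_apply, hfd]
  simp [EuclideanSpace.single_apply]

open scoped BigOperators Classical RealInnerProductSpace
open Finset MeasureTheory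

lemma deriv_kappa (d : ℕ) (K : ℝ) (hK : 0 < K) (V : Pt d → ℝ) (Vs : Fin d → ℝ → ℝ)
    (hVs : ∀ j, ContDiff ℝ 2 (Vs j)) (hadd : IsAdditive d V Vs) (κ : ℝ) (hA2 : A2 d K V κ)
    (j : Fin d) (a b : ℝ) (ha : |a| ≤ K) (hb : |b| ≤ K) :
    κ * (a - b)^2 ≤ (a - b) * (deriv (Vs j) a - deriv (Vs j) b) := by
  set x : Pt d := EuclideanSpace.single j a with hx
  set y : Pt d := EuclideanSpace.single j b with hy
  have hxm : ∀ m, |x m| ≤ K := by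
    intro m; rw [hx, EuclideanSpace.single_apply]
    split
    · exact ha
    · simpa using hK.le
  have hym : ∀ m, |y m| ≤ K := by
    intro m; rw [hy, EuclideanSpace.single_apply]
    split
    · exact hb
    · simpa using hK.le
  have h2 := hA2 x y hxm hym
  have hxy : x - y = EuclideanSpace.single j (a - b) := by
    ext m
    show x m - y m = _
    rw [hx, hy, EuclideanSpace.single_apply, EuclideanSpace.single_apply,
      EuclideanSpace.single_apply]
    split <;> ring
  rw [hxy] at h2
  have hnorm : ‖EuclideanSpace.single j (a - b)‖ = |a - b| := by
    rw [EuclideanSpace.norm_single]; rfl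
  have hinner : ⟪EuclideanSpace.single j (a - b), gradient V x - gradient V y⟫ =
      (a - b) * ((gradient V x - gradient V y) j) := by
    rw [EuclideanSpace.inner_single_left]; simp
  rw [hnorm, hinner] at h2
  have hgj : (gradient V x - gradient V y) j = deriv (Vs j) a - deriv (Vs j) b := by
    show gradient V x j - gradient V y j = _
    rw [gradient_coord d V Vs hVs hadd, gradient_coord d V Vs hVs hadd, hx, hy]
    congr 2 <;> simp [EuclideanSpace.single_apply]
  rw [hgj] at h2
  calc κ * (a - b)^2 = κ * |a - b| ^ 2 := by rw [sq_abs]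
  _ ≤ _ := h2

lemma Vjh_convex_step (K h κ : ℝ) (hh : 0 < h) (W : ℝ → ℝ) (hW : ContDiff ℝ 2 W)
    (hmono : ∀ a b : ℝ, |a| ≤ K → |b| ≤ K → b ≤ a → κ * (a - b) ≤ deriv W a - deriv W b)
    (y : ℝ) (hy1 : -K + h/2 ≤ y) (hy2 : y + 2*h ≤ K - h/2) :
    Vjh h W (y + h) - Vjh h W y + κ * h^2 ≤ Vjh h W (y + 2*h) - Vjh h W (y + h) := by
  have hWd : Differentiable ℝ W := hW.differentiable (by norm_num)
  have hW' : Continuous (deriv W) := hW.continuous_deriv one_le_two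
  set S : Set ℝ := Set.Icc (-(h/2)) (h/2) with hS
  -- pointwise second difference bound
  have hpt : ∀ s ∈ S, κ * h^2 ≤ W (y + 2*h + s) - W (y + h + s) - (W (y + h + s) - W (y + s)) := by
    intro s hs
    obtain ⟨hs1, hs2⟩ := hs
    set u := y + s with hu
    have hgder : ∀ t, HasDerivAt (fun t => W (t + h) - W t) (deriv W (t + h) - deriv W t) t := by
      intro t
      have h1 : HasDerivAt (fun t => W (t + h)) (deriv W (t + h) * 1) t :=
        HasDerivAt.comp t (hWd (t + h)).hasDerivAt ((hasDerivAt_id t).add_const h)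
      rw [mul_one] at h1
      exact h1.sub (hWd t).hasDerivAt
    have hint : (∫ t in u..(u + h), (deriv W (t + h) - deriv W t)) =
        (W (u + h + h) - W (u + h)) - (W (u + h) - W u) := by
      rw [intervalIntegral.integral_eq_sub_of_hasDerivAt (fun t _ => hgder t)
        (((hW'.comp (continuous_id.add continuous_const)).sub hW').intervalIntegrable u (u+h))]
    have hlow : (∫ t in u..(u + h), (κ * h)) ≤ ∫ t in u..(u + h), (deriv W (t + h) - deriv W t) := by
      apply intervalIntegral.integral_mono_on (by linarith)
        (intervalIntegrable_const)
        (((hW'.comp (continuous_id.add continuous_const)).sub hW').intervalIntegrable u (u+h))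
      intro t ht
      obtain ⟨ht1, ht2⟩ := ht
      have hb1 : |t + h| ≤ K := by
        rw [abs_le]; constructor <;> nlinarith
      have hb2 : |t| ≤ K := by
        rw [abs_le]; constructor <;> nlinarith
      have := hmono (t + h) t hb1 hb2 (by linarith)
      calc κ * h = κ * (t + h - t) := by ring
      _ ≤ _ := this
    rw [intervalIntegral.integral_const, smul_eq_mul] at hlow
    rw [hint] at hlow
    have e1 : u + h + h = y + 2*h + s := by rw [hu]; ring
    have e2 : u + h = y + h + s := by rw [hu]; ring
    have e3 : u = y + s := hu
    rw [e1, e2, e3] at hlow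
    nlinarith [hlow]
  -- integrate
  have hmeas : MeasurableSet S := measurableSet_Icc
  have hcomp : IsCompact S := isCompact_Icc
  have hi1 : IntegrableOn (fun s => W (y + 2*h + s)) S :=
    ((hWd.continuous.comp (continuous_const.add continuous_id)).continuousOn).integrableOn_compact hcomp
  have hi2 : IntegrableOn (fun s => W (y + h + s)) S :=
    ((hWd.continuous.comp (continuous_const.add continuous_id)).continuousOn).integrableOn_compact hcomp
  have hi3 : IntegrableOn (fun s => W (y + s)) S :=
    ((hWd.continuous.comp (continuous_const.add continuous_id)).continuousOn).integrableOn_compact hcomp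
  have hint2 : (∫ s in S, (κ * h^2)) ≤
      ∫ s in S, (W (y + 2*h + s) - W (y + h + s) - (W (y + h + s) - W (y + s))) := by
    apply setIntegral_mono_on (integrableOn_const hcomp.measure_lt_top.ne)
      (((hi1.sub hi2).sub (hi2.sub hi3))) hmeas hpt
  rw [setIntegral_const, smul_eq_mul, hS, Real.volume_real_Icc,
    show h/2 - -(h/2) = h by ring, max_eq_left hh.le] at hint2
  have hi12 : IntegrableOn (fun s => W (y + 2*h + s) - W (y + h + s)) S := hi1.sub hi2
  have hi23 : IntegrableOn (fun s => W (y + h + s) - W (y + s)) S := hi2.sub hi3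
  rw [integral_sub hi12 hi23, integral_sub hi1 hi2, integral_sub hi2 hi3] at hint2
  have hv1 : Vjh h W (y + 2*h) = (1/h) * ∫ s in S, W (y + 2*h + s) := rfl
  have hv2 : Vjh h W (y + h) = (1/h) * ∫ s in S, W (y + h + s) := rfl
  have hv3 : Vjh h W y = (1/h) * ∫ s in S, W (y + s) := rfl
  rw [hv1, hv2, hv3]
  have hhinv : 0 < 1/h := by positivity
  have key := mul_le_mul_of_nonneg_left hint2 hhinv.le
  have h4 : (1/h) * (h * (κ * h^2)) = κ * h^2 := by field_simp
  rw [h4] at key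
  ring_nf at key ⊢
  linarith [key]

lemma act_coord_ne (d : ℕ) (h : ℝ) (γ : Move d) (x : Pt d) (m : Fin d) (hm : m ≠ γ.dir) :
    (γ.act h x) m = x m := by
  cases γ with
  | pos k => rw [act_pos_apply]; exact if_neg hm
  | neg k => rw [act_neg_apply]; exact if_neg hm

lemma rate_formula (d : ℕ) (hd : 0 < d) (K h σ : ℝ) (hh : 0 < h) (N : ℕ) (V : Pt d → ℝ)
    (Vs : Fin d → ℝ → ℝ) (hVs : ∀ j, Continuous (Vs j)) (hadd : IsAdditive d V Vs)
    (x : Pt d) (γ : Move d) (hx : x ∈ grid d K h N) (hγ : γ.act h x ∈ grid d K h N) :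
    rate d K h σ N V x γ = σ^2/h^2 *
      Real.exp (-(Vjh h (Vs γ.dir) ((γ.act h x) γ.dir) - Vjh h (Vs γ.dir) (x γ.dir))
        / (2*σ^2)) := by
  rw [rate, if_pos ⟨hx, hγ⟩]
  congr 2
  rw [Vh_eq_sum d hd h hh V Vs hVs hadd, Vh_eq_sum d hd h hh V Vs hVs hadd,
    ← Finset.sum_sub_distrib]
  rw [Finset.sum_eq_single γ.dir
    (fun m _ hm => by rw [act_coord_ne d h γ x m hm]; ring)
    (fun hmem => absurd (Finset.mem_univ _) hmem)]

lemma act_mem_iff (d : ℕ) (K h : ℝ) (N : ℕ) (j : Fin d) (i : Pt d)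
    (hi : i ∈ grid d K h N) (hi' : (Move.pos j).act h i ∈ grid d K h N)
    (γ : Move d) (hγj : γ.dir ≠ j) :
    γ.act h ((Move.pos j).act h i) ∈ grid d K h N ↔ γ.act h i ∈ grid d K h N := by
  set i' := (Move.pos j).act h i with hi'def
  have hcoord : (γ.act h i') γ.dir = (γ.act h i) γ.dir := by
    have hij : i' γ.dir = i γ.dir := by
      rw [hi'def, act_pos_apply, if_neg hγj]
    cases γ with
    | pos k =>
      rw [act_pos_apply, act_pos_apply]
      simp only [Move.dir] at hij ⊢
      simp [hij, act_pos_apply, show k ≠ j from hγj]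
    | neg k =>
      rw [act_neg_apply, act_neg_apply]
      simp only [Move.dir] at hij ⊢
      simp [hij]
  rw [mem_grid_iff, mem_grid_iff]
  constructor
  · intro H m
    rcases eq_or_ne m γ.dir with rfl | hm
    · rw [← hcoord]; exact H _
    · rw [act_coord_ne d h γ i m hm]; exact (mem_grid_iff d K h N i).mp hi m
  · intro H m
    rcases eq_or_ne m γ.dir with rfl | hm
    · rw [hcoord]; exact H _
    · rw [act_coord_ne d h γ i' m hm]; exact (mem_grid_iff d K h N i').mp hi' m

lemma rate_shift (d : ℕ) (hd : 0 < d) (K h σ : ℝ) (hh : 0 < h) (N : ℕ) (V : Pt d → ℝ)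
    (Vs : Fin d → ℝ → ℝ) (hVs : ∀ j, Continuous (Vs j)) (hadd : IsAdditive d V Vs)
    (j : Fin d) (i : Pt d) (hi : i ∈ grid d K h N) (hi' : (Move.pos j).act h i ∈ grid d K h N)
    (γ : Move d) (hγj : γ.dir ≠ j) :
    rate d K h σ N V ((Move.pos j).act h i) γ = rate d K h σ N V i γ := by
  set i' := (Move.pos j).act h i with hi'def
  by_cases hc : γ.act h i ∈ grid d K h N
  · have hc' : γ.act h i' ∈ grid d K h N :=
      (act_mem_iff d K h N j i hi hi' γ hγj).mpr hc
    rw [rate_formula d hd K h σ hh N V Vs hVs hadd i' γ hi' hc',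
      rate_formula d hd K h σ hh N V Vs hVs hadd i γ hi hc]
    have hij : i' γ.dir = i γ.dir := by rw [hi'def, act_pos_apply, if_neg hγj]
    have hcoord : (γ.act h i') γ.dir = (γ.act h i) γ.dir := by
      cases γ with
      | pos k =>
        rw [act_pos_apply, act_pos_apply]
        simp only [Move.dir] at hij ⊢
        simp [hij, act_pos_apply, show k ≠ j from hγj]
      | neg k =>
        rw [act_neg_apply, act_neg_apply]
        simp only [Move.dir] at hij ⊢
        simp [hij]
    rw [hij, hcoord]
  · rw [rate, rate, if_neg, if_neg]
    · exact fun hand => hc hand.2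
    · intro hand
      exact hc ((act_mem_iff d K h N j i hi hi' γ hγj).mp hand.2)

lemma scalar_bound (σ h κ A R2 : ℝ) (hσ : 0 < σ) (hh : 0 < h) (hκpos : 0 < κ)
    (hcase : R2 = 0 ∨ ∃ B : ℝ, R2 = σ^2/h^2 * Real.exp (-B/(2*σ^2)) ∧ A + κ*h^2 ≤ B) :
    σ^2/h^2 * Real.exp (-A/(2*σ^2)) * (1 - Real.exp (-(κ*h^2)/(2*σ^2))) ≤
      σ^2/h^2 * Real.exp (-A/(2*σ^2)) - R2 := by
  have hRpos : 0 < σ^2/h^2 * Real.exp (-A/(2*σ^2)) := by positivity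
  have hEpos : 0 < Real.exp (-(κ*h^2)/(2*σ^2)) := Real.exp_pos _
  rcases hcase with rfl | ⟨B, rfl, hAB⟩
  · nlinarith
  · have key : σ^2/h^2 * Real.exp (-B/(2*σ^2)) ≤
        σ^2/h^2 * Real.exp (-A/(2*σ^2)) * Real.exp (-(κ*h^2)/(2*σ^2)) := by
      rw [mul_assoc, ← Real.exp_add]
      have harg : -A/(2*σ^2) + -(κ*h^2)/(2*σ^2) = -(A + κ*h^2)/(2*σ^2) := by ring
      rw [harg]
      have h2σ : (0:ℝ) < 2*σ^2 := by positivity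
      have : -B ≤ -(A + κ*h^2) := by linarith
      gcongr
    nlinarith

/-- Additive strongly convex potentials satisfy Assumption (A3) (Remark 3.3). -/
theorem additive_potential_satisfies_A3
    (d : ℕ) (K h σ : ℝ) (N : ℕ) (V : Pt d → ℝ) (hp : Params d K h σ N V)
    (Vs : Fin d → ℝ → ℝ) (hVs : ∀ j, ContDiff ℝ 2 (Vs j))
    (hadd : IsAdditive d V Vs) (κ : ℝ) (hκ : 0 < κ) (hA2 : A2 d K V κ) :
    (∀ j : Fin d, ∀ i ∈ grid d K h N, (Move.pos j).act h i ∈ grid d K h N →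
      σ ^ 2 / h ^ 2 * Real.exp (-(Vjh h (Vs j) (i j + h) - Vjh h (Vs j) (i j)) / (2 * σ ^ 2))
          * (1 - Real.exp (-(κ * h ^ 2) / (2 * σ ^ 2)))
        ≤ kplus d K h σ N V i j ∧
      0 < σ ^ 2 / h ^ 2 * Real.exp (-(Vjh h (Vs j) (i j + h) - Vjh h (Vs j) (i j)) / (2 * σ ^ 2))
          * (1 - Real.exp (-(κ * h ^ 2) / (2 * σ ^ 2)))) ∧
    (∀ j : Fin d, ∀ i ∈ grid d K h N, (Move.neg j).act h i ∈ grid d K h N →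
      σ ^ 2 / h ^ 2 * Real.exp (-(Vjh h (Vs j) (i j - h) - Vjh h (Vs j) (i j)) / (2 * σ ^ 2))
          * (1 - Real.exp (-(κ * h ^ 2) / (2 * σ ^ 2)))
        ≤ kminus d K h σ N V i j ∧
      0 < σ ^ 2 / h ^ 2 * Real.exp (-(Vjh h (Vs j) (i j - h) - Vjh h (Vs j) (i j)) / (2 * σ ^ 2))
          * (1 - Real.exp (-(κ * h ^ 2) / (2 * σ ^ 2)))) ∧
    A3 d K h σ N V := by
  obtain ⟨hd1, hK, hh, hN, hσ, hV2⟩ := hp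
  have hd : 0 < d := hd1
  have hVsc : ∀ j, Continuous (Vs j) := fun j => (hVs j).continuous
  have hmono : ∀ j : Fin d, ∀ a b : ℝ, |a| ≤ K → |b| ≤ K → b ≤ a →
      κ * (a - b) ≤ deriv (Vs j) a - deriv (Vs j) b := by
    intro j a b ha hb hba
    rcases eq_or_lt_of_le hba with rfl | hlt
    · simp
    · have := deriv_kappa d K hK V Vs hVs hadd κ hA2 j a b ha hb
      nlinarith
  have hEpos : 0 < Real.exp (-(κ * h ^ 2) / (2 * σ ^ 2)) := Real.exp_pos _
  have hElt : Real.exp (-(κ * h ^ 2) / (2 * σ ^ 2)) < 1 := by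
    rw [Real.exp_lt_one_iff]
    have : 0 < κ * h ^ 2 := by positivity
    have h2σ : (0:ℝ) < 2 * σ ^ 2 := by positivity
    exact div_neg_of_neg_of_pos (by linarith) h2σ
  have hpos : ∀ x : ℝ, 0 < σ ^ 2 / h ^ 2 * Real.exp x *
      (1 - Real.exp (-(κ * h ^ 2) / (2 * σ ^ 2))) := by
    intro x
    have h1 : 0 < σ ^ 2 / h ^ 2 * Real.exp x := by positivity
    have h2 : 0 < 1 - Real.exp (-(κ * h ^ 2) / (2 * σ ^ 2)) := by linarith
    exact mul_pos h1 h2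
  -- κ₊ bound
  have HP : ∀ j : Fin d, ∀ i ∈ grid d K h N, (Move.pos j).act h i ∈ grid d K h N →
      σ ^ 2 / h ^ 2 * Real.exp (-(Vjh h (Vs j) (i j + h) - Vjh h (Vs j) (i j)) / (2 * σ ^ 2))
        * (1 - Real.exp (-(κ * h ^ 2) / (2 * σ ^ 2))) ≤ kplus d K h σ N V i j := by
    intro j i hi hi'
    have hij : ((Move.pos j).act h i) j = i j + h := by simp [act_pos_apply]
    have hR : rate d K h σ N V i (Move.pos j) = σ ^ 2 / h ^ 2 *
        Real.exp (-(Vjh h (Vs j) (i j + h) - Vjh h (Vs j) (i j)) / (2 * σ ^ 2)) := by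
      rw [rate_formula d hd K h σ hh N V Vs hVsc hadd i _ hi hi']
      simp only [Move.dir]
      rw [hij]
    have hsum : ∑ γ ∈ Finset.univ.filter (fun γ : Move d => γ.dir ≠ j),
        max (rate d K h σ N V ((Move.pos j).act h i) γ - rate d K h σ N V i γ) 0 = 0 := by
      refine Finset.sum_eq_zero (fun γ hγ => ?_)
      have hγj : γ.dir ≠ j := (Finset.mem_filter.mp hγ).2
      rw [rate_shift d hd K h σ hh N V Vs hVsc hadd j i hi hi' γ hγj, sub_self]
      exact max_self 0
    simp only [kplus]
    rw [hsum, sub_zero, hR]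
    apply scalar_bound σ h κ _ _ hσ hh hκ
    by_cases hc : (Move.pos j).act h ((Move.pos j).act h i) ∈ grid d K h N
    · right
      refine ⟨Vjh h (Vs j) (i j + 2 * h) - Vjh h (Vs j) (i j + h), ?_, ?_⟩
      · rw [rate_formula d hd K h σ hh N V Vs hVsc hadd _ _ hi' hc]
        simp only [Move.dir]
        have h1 : ((Move.pos j).act h ((Move.pos j).act h i)) j = i j + 2 * h := by
          simp [act_pos_apply]; ring
        rw [h1, hij]
      · have hy1 : -K + h / 2 ≤ i j :=
          (cg_bounds K h N hh hN ((mem_grid_iff d K h N i).mp hi j)).1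
        have hy2 : i j + 2 * h ≤ K - h / 2 := by
          have hc2 := (cg_bounds K h N hh hN
            ((mem_grid_iff d K h N _).mp hc j)).2
          have h1 : ((Move.pos j).act h ((Move.pos j).act h i)) j = i j + 2 * h := by
            simp [act_pos_apply]; ring
          rw [h1] at hc2
          exact hc2
        have := Vjh_convex_step K h κ hh (Vs j) (hVs j) (hmono j) (i j) hy1 hy2
        linarith
    · left
      rw [rate, if_neg]
      exact fun hand => hc hand.2
  -- κ₋ bound
  have HM : ∀ j : Fin d, ∀ i ∈ grid d K h N, (Move.neg j).act h i ∈ grid d K h N →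
      σ ^ 2 / h ^ 2 * Real.exp (-(Vjh h (Vs j) (i j - h) - Vjh h (Vs j) (i j)) / (2 * σ ^ 2))
        * (1 - Real.exp (-(κ * h ^ 2) / (2 * σ ^ 2))) ≤ kminus d K h σ N V i j := by
    intro j i hi hi'
    have heq : (Move.pos j).act h ((Move.neg j).act h i) = i := by
      show i - EuclideanSpace.single j h + EuclideanSpace.single j h = i
      exact sub_add_cancel i _
    have hij : ((Move.neg j).act h i) j = i j - h := by simp [act_neg_apply]
    have hR : rate d K h σ N V i (Move.neg j) = σ ^ 2 / h ^ 2 *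
        Real.exp (-(Vjh h (Vs j) (i j - h) - Vjh h (Vs j) (i j)) / (2 * σ ^ 2)) := by
      rw [rate_formula d hd K h σ hh N V Vs hVsc hadd i _ hi hi']
      simp only [Move.dir]
      rw [hij]
    have hsum : ∑ γ ∈ Finset.univ.filter (fun γ : Move d => γ.dir ≠ j),
        max (rate d K h σ N V ((Move.neg j).act h i) γ - rate d K h σ N V i γ) 0 = 0 := by
      refine Finset.sum_eq_zero (fun γ hγ => ?_)
      have hγj : γ.dir ≠ j := (Finset.mem_filter.mp hγ).2
      have hmem2 : (Move.pos j).act h ((Move.neg j).act h i) ∈ grid d K h N := by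
        rw [heq]; exact hi
      have hs := rate_shift d hd K h σ hh N V Vs hVsc hadd j ((Move.neg j).act h i)
        hi' hmem2 γ hγj
      rw [heq] at hs
      rw [← hs, sub_self]
      exact max_self 0
    simp only [kminus]
    rw [hsum, sub_zero, hR]
    apply scalar_bound σ h κ _ _ hσ hh hκ
    by_cases hc : (Move.neg j).act h ((Move.neg j).act h i) ∈ grid d K h N
    · right
      refine ⟨Vjh h (Vs j) (i j - 2 * h) - Vjh h (Vs j) (i j - h), ?_, ?_⟩
      · rw [rate_formula d hd K h σ hh N V Vs hVsc hadd _ _ hi' hc]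
        simp only [Move.dir]
        have h1 : ((Move.neg j).act h ((Move.neg j).act h i)) j = i j - 2 * h := by
          simp [act_neg_apply]; ring
        rw [h1, hij]
      · have hy2' : i j ≤ K - h / 2 :=
          (cg_bounds K h N hh hN ((mem_grid_iff d K h N i).mp hi j)).2
        have hy1 : -K + h / 2 ≤ i j - 2 * h := by
          have hc1 := (cg_bounds K h N hh hN
            ((mem_grid_iff d K h N _).mp hc j)).1
          have h1 : ((Move.neg j).act h ((Move.neg j).act h i)) j = i j - 2 * h := by
            simp [act_neg_apply]; ring
          rw [h1] at hc1
          exact hc1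
        have hy2 : (i j - 2 * h) + 2 * h ≤ K - h / 2 := by linarith
        have hstep := Vjh_convex_step K h κ hh (Vs j) (hVs j) (hmono j) (i j - 2 * h) hy1 hy2
        have e1 : i j - 2 * h + h = i j - h := by ring
        have e2 : i j - 2 * h + 2 * h = i j := by ring
        rw [e1, e2] at hstep
        linarith
    · left
      rw [rate, if_neg]
      exact fun hand => hc hand.2
  exact ⟨fun j i hi hi' => ⟨HP j i hi hi', hpos _⟩,
    fun j i hi hi' => ⟨HM j i hi hi', hpos _⟩,
    fun j i hi hi' => lt_of_lt_of_le (hpos _) (HP j i hi hi'),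
    fun j i hi hi' => lt_of_lt_of_le (hpos _) (HM j i hi hi')⟩
end

section
/- The rates 𝐜 are genuine coupling rates with matched mass at least κ_φ (Lemma 5.2): assume (A3). Then for every j=1,…,d and every i with i,i+he_j∈𝒦_h: Σ_{γ̄∈G∪{e}} 𝐜(i,i+he_j,γ,γ̄) = c(i,γ) for every γ∈G, Σ_{γ∈G∪{e}} 𝐜(i,i+he_j,γ,γ̄) = c(i+he_j,γ̄) for every γ̄∈G, and Σ over all pairs (γ,γ̄)∈(G∪{e})² with γi = γ̄(i+he_j) of 𝐜(i,i+he_j,γ,γ̄) ≥ κ₊(i,j)+κ₋(i+he_j,j) ≥ κ_φ. -/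
open scoped BigOperators Classical RealInnerProductSpace
open Finset MeasureTheory

lemma act_cancel {d : ℕ} (h : ℝ) (j : Fin d) (x : Pt d) :
    (Move.neg j).act h ((Move.pos j).act h x) = x := by
  simp [Move.act]

lemma rate_nonneg (d : ℕ) (K h σ : ℝ) (N : ℕ) (V : Pt d → ℝ) (x : Pt d) (γ : Move d) :
    0 ≤ rate d K h σ N V x γ := by
  unfold rate; split
  · positivity
  · exact le_rfl

lemma filter_dir_eq {d : ℕ} (j : Fin d) :
    (Finset.univ.filter fun γ : Move d => γ.dir = j) = {Move.pos j, Move.neg j} := by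
  ext γ
  rw [Finset.mem_filter]
  rcases γ with k | k <;> simp [Move.dir]

lemma sum_move_split {d : ℕ} (j : Fin d) (f : Move d → ℝ) :
    ∑ b : Move d, f b
      = f (Move.pos j) + f (Move.neg j)
        + ∑ b ∈ Finset.univ.filter (fun b : Move d => b.dir ≠ j), f b := by
  classical
  rw [← Finset.sum_filter_add_sum_filter_not Finset.univ (fun b : Move d => b.dir = j) f,
    filter_dir_eq, Finset.sum_pair (by simp)]

lemma minmax (a b : ℝ) : min a b + max (a - b) 0 = a := by
  rcases le_total a b with hab | hab
  · rw [min_eq_left hab, max_eq_right (sub_nonpos.mpr hab), add_zero]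
  · rw [min_eq_right hab, max_eq_left (sub_nonneg.mpr hab)]; ring

/-- The rates `𝐜` are genuine coupling rates with matched mass at least `κ_φ`
(Lemma 5.2). -/
theorem coupling_rates_marginals
    (d : ℕ) (K h σ : ℝ) (N : ℕ) (V : Pt d → ℝ) (hp : Params d K h σ N V)
    (hA3 : A3 d K h σ N V) (j : Fin d) (i : Pt d)
    (hi : i ∈ grid d K h N) (hij : (Move.pos j).act h i ∈ grid d K h N) :
    (∀ γ : Move d, ∑ γb : Option (Move d),
        crate d K h σ N V i j (some γ) γb = rate d K h σ N V i γ) ∧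
    (∀ γb : Move d, ∑ γ : Option (Move d),
        crate d K h σ N V i j γ (some γb)
          = rate d K h σ N V ((Move.pos j).act h i) γb) ∧
    (kplus d K h σ N V i j + kminus d K h σ N V ((Move.pos j).act h i) j
      ≤ ∑ q : Option (Move d) × Option (Move d),
          if actO h q.1 i = actO h q.2 ((Move.pos j).act h i) then
            crate d K h σ N V i j q.1 q.2 else 0) ∧
    kappaPhi d K h σ N V
      ≤ kplus d K h σ N V i j + kminus d K h σ N V ((Move.pos j).act h i) j := by
  classical
  obtain ⟨hA3p, hA3m⟩ := hA3
  have hcanc : (Move.neg j).act h ((Move.pos j).act h i) = i := act_cancel h j i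
  have hplus : 0 < kplus d K h σ N V i j := hA3p j i hi hij
  have hminus : 0 < kminus d K h σ N V ((Move.pos j).act h i) j :=
    hA3m j _ hij (by rw [hcanc]; exact hi)
  have Sp_nonneg : 0 ≤ ∑ γ ∈ Finset.univ.filter fun γ : Move d => γ.dir ≠ j,
      max (rate d K h σ N V ((Move.pos j).act h i) γ - rate d K h σ N V i γ) 0 :=
    Finset.sum_nonneg fun _ _ => le_max_right _ _
  have Sm_nonneg : 0 ≤ ∑ γ ∈ Finset.univ.filter fun γ : Move d => γ.dir ≠ j,
      max (rate d K h σ N V i γ - rate d K h σ N V ((Move.pos j).act h i) γ) 0 :=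
    Finset.sum_nonneg fun _ _ => le_max_right _ _
  have hkp : kplus d K h σ N V i j
      = rate d K h σ N V i (Move.pos j)
        - rate d K h σ N V ((Move.pos j).act h i) (Move.pos j)
        - ∑ γ ∈ Finset.univ.filter fun γ : Move d => γ.dir ≠ j,
            max (rate d K h σ N V ((Move.pos j).act h i) γ - rate d K h σ N V i γ) 0 := rfl
  have hkm : kminus d K h σ N V ((Move.pos j).act h i) j
      = rate d K h σ N V ((Move.pos j).act h i) (Move.neg j)
        - rate d K h σ N V i (Move.neg j)
        - ∑ γ ∈ Finset.univ.filter fun γ : Move d => γ.dir ≠ j,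
            max (rate d K h σ N V i γ - rate d K h σ N V ((Move.pos j).act h i) γ) 0 := by
    unfold kminus
    rw [hcanc]
  have hBA : rate d K h σ N V ((Move.pos j).act h i) (Move.pos j)
      ≤ rate d K h σ N V i (Move.pos j) := by
    rw [hkp] at hplus; linarith
  have hAB : rate d K h σ N V i (Move.neg j)
      ≤ rate d K h σ N V ((Move.pos j).act h i) (Move.neg j) := by
    rw [hkm] at hminus; linarith
  refine ⟨?_, ?_, ?_, ?_⟩
  · -- first marginal
    intro γ
    rw [Fintype.sum_option, sum_move_split j]
    by_cases h1 : γ = Move.pos j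
    · subst h1
      have e1 : ∀ b ∈ Finset.univ.filter (fun b : Move d => b.dir ≠ j),
          crate d K h σ N V i j (some (Move.pos j)) (some b)
            = max (rate d K h σ N V ((Move.pos j).act h i) b - rate d K h σ N V i b) 0 := by
        intro b hb
        simp only [Finset.mem_filter] at hb
        have hbne : Move.pos j ≠ b := by rintro rfl; exact hb.2 rfl
        simp [crate, hbne, hb.2]
      rw [Finset.sum_congr rfl e1]
      have e2 : crate d K h σ N V i j (some (Move.pos j)) none = kplus d K h σ N V i j := by
        simp [crate]
      have e3 : crate d K h σ N V i j (some (Move.pos j)) (some (Move.pos j))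
          = min (rate d K h σ N V i (Move.pos j))
              (rate d K h σ N V ((Move.pos j).act h i) (Move.pos j)) := by
        simp [crate]
      have e4 : crate d K h σ N V i j (some (Move.pos j)) (some (Move.neg j)) = 0 := by
        simp [crate, Move.dir]
      rw [e2, e3, e4, min_eq_right hBA, hkp]; ring
    · by_cases h2 : γ = Move.neg j
      · subst h2
        have e1 : ∀ b ∈ Finset.univ.filter (fun b : Move d => b.dir ≠ j),
            crate d K h σ N V i j (some (Move.neg j)) (some b) = 0 := by
          intro b hb
          simp only [Finset.mem_filter] at hb
          have hbne : Move.neg j ≠ b := by rintro rfl; exact hb.2 rfl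
          simp [crate, hbne, Move.dir]
        rw [Finset.sum_congr rfl e1, Finset.sum_const_zero]
        have e2 : crate d K h σ N V i j (some (Move.neg j)) none = 0 := by
          simp [crate]
        have e3 : crate d K h σ N V i j (some (Move.neg j)) (some (Move.pos j)) = 0 := by
          simp [crate, Move.dir]
        have e4 : crate d K h σ N V i j (some (Move.neg j)) (some (Move.neg j))
            = min (rate d K h σ N V i (Move.neg j))
                (rate d K h σ N V ((Move.pos j).act h i) (Move.neg j)) := by
          simp [crate]
        rw [e2, e3, e4, min_eq_left hAB]; ring
      · have hγ : γ.dir ≠ j := by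
          rcases γ with k | k
          · intro hk; apply h1; simp only [Move.dir] at hk; subst hk; rfl
          · intro hk; apply h2; simp only [Move.dir] at hk; subst hk; rfl
        have hγp : γ ≠ Move.pos j := h1
        have hγn : γ ≠ Move.neg j := h2
        have e1 : ∀ b ∈ Finset.univ.filter (fun b : Move d => b.dir ≠ j),
            crate d K h σ N V i j (some γ) (some b)
              = if γ = b then
                  min (rate d K h σ N V i b) (rate d K h σ N V ((Move.pos j).act h i) b)
                else 0 := by
          intro b hb
          simp only [Finset.mem_filter] at hb
          by_cases hgb : γ = b
          · subst hgb; simp [crate]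
          · have hbn : b ≠ Move.neg j := by rintro rfl; exact hb.2 rfl
            simp [crate, hgb, hγp, hbn]
        rw [Finset.sum_congr rfl e1, Finset.sum_ite_eq]
        have e2 : crate d K h σ N V i j (some γ) none = 0 := by simp [crate, hγp]
        have e3 : crate d K h σ N V i j (some γ) (some (Move.pos j)) = 0 := by
          simp [crate, hγp, Move.dir]
        have e4 : crate d K h σ N V i j (some γ) (some (Move.neg j))
            = max (rate d K h σ N V i γ - rate d K h σ N V ((Move.pos j).act h i) γ) 0 := by
          simp [crate, hγn, hγp, hγ]
        rw [e2, e3, e4]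
        simp only [Finset.mem_filter, Finset.mem_univ, true_and]
        rw [if_pos hγ]
        have := minmax (rate d K h σ N V i γ) (rate d K h σ N V ((Move.pos j).act h i) γ)
        linarith
  · -- second marginal
    intro γb
    rw [Fintype.sum_option, sum_move_split j (fun a : Move d => crate d K h σ N V i j (some a) (some γb))]
    by_cases h1 : γb = Move.pos j
    · subst h1
      have e1 : ∀ a ∈ Finset.univ.filter (fun a : Move d => a.dir ≠ j),
          crate d K h σ N V i j (some a) (some (Move.pos j)) = 0 := by
        intro a ha
        simp only [Finset.mem_filter] at ha
        have hane : a ≠ Move.pos j := by rintro rfl; exact ha.2 rfl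
        simp [crate, hane, Move.dir]
      rw [Finset.sum_congr rfl e1, Finset.sum_const_zero]
      have e2 : crate d K h σ N V i j none (some (Move.pos j)) = 0 := by simp [crate]
      have e3 : crate d K h σ N V i j (some (Move.pos j)) (some (Move.pos j))
          = min (rate d K h σ N V i (Move.pos j))
              (rate d K h σ N V ((Move.pos j).act h i) (Move.pos j)) := by simp [crate]
      have e4 : crate d K h σ N V i j (some (Move.neg j)) (some (Move.pos j)) = 0 := by
        simp [crate, Move.dir]
      rw [e2, e3, e4, min_eq_right hBA]; ring
    · by_cases h2 : γb = Move.neg j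
      · subst h2
        have e1 : ∀ a ∈ Finset.univ.filter (fun a : Move d => a.dir ≠ j),
            crate d K h σ N V i j (some a) (some (Move.neg j))
              = max (rate d K h σ N V i a - rate d K h σ N V ((Move.pos j).act h i) a) 0 := by
          intro a ha
          simp only [Finset.mem_filter] at ha
          have hane : a ≠ Move.neg j := by rintro rfl; exact ha.2 rfl
          have hanp : a ≠ Move.pos j := by rintro rfl; exact ha.2 rfl
          simp [crate, hane, hanp, ha.2]
        rw [Finset.sum_congr rfl e1]
        have e2 : crate d K h σ N V i j none (some (Move.neg j))
            = kminus d K h σ N V ((Move.pos j).act h i) j := by simp [crate]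
        have e3 : crate d K h σ N V i j (some (Move.pos j)) (some (Move.neg j)) = 0 := by
          simp [crate, Move.dir]
        have e4 : crate d K h σ N V i j (some (Move.neg j)) (some (Move.neg j))
            = min (rate d K h σ N V i (Move.neg j))
                (rate d K h σ N V ((Move.pos j).act h i) (Move.neg j)) := by simp [crate]
        rw [e2, e3, e4, min_eq_left hAB, hkm]; ring
      · have hγ : γb.dir ≠ j := by
          rcases γb with k | k
          · intro hk; apply h1; simp only [Move.dir] at hk; subst hk; rfl
          · intro hk; apply h2; simp only [Move.dir] at hk; subst hk; rfl
        have e1 : ∀ a ∈ Finset.univ.filter (fun a : Move d => a.dir ≠ j),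
            crate d K h σ N V i j (some a) (some γb)
              = if a = γb then
                  min (rate d K h σ N V i γb) (rate d K h σ N V ((Move.pos j).act h i) γb)
                else 0 := by
          intro a ha
          simp only [Finset.mem_filter] at ha
          by_cases hab : a = γb
          · subst hab; simp [crate]
          · have hanp : a ≠ Move.pos j := by rintro rfl; exact ha.2 rfl
            simp [crate, hab, hanp, h2]
        rw [Finset.sum_congr rfl e1, Finset.sum_ite_eq']
        have e2 : crate d K h σ N V i j none (some γb) = 0 := by simp [crate, h2]
        have e3 : crate d K h σ N V i j (some (Move.pos j)) (some γb)
            = max (rate d K h σ N V ((Move.pos j).act h i) γb - rate d K h σ N V i γb) 0 := by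
          have hne : Move.pos j ≠ γb := fun hc => h1 hc.symm
          simp [crate, hne, hγ]
        have e4 : crate d K h σ N V i j (some (Move.neg j)) (some γb) = 0 := by
          have hne : Move.neg j ≠ γb := fun hc => h2 hc.symm
          simp [crate, hne, Move.dir]
        rw [e2, e3, e4]
        simp only [Finset.mem_filter, Finset.mem_univ, true_and]
        rw [if_pos hγ]
        have := minmax (rate d K h σ N V ((Move.pos j).act h i) γb) (rate d K h σ N V i γb)
        have hmc := min_comm (rate d K h σ N V i γb) (rate d K h σ N V ((Move.pos j).act h i) γb)
        linarith
  · -- matched mass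
    have hnn : ∀ q : Option (Move d) × Option (Move d),
        0 ≤ (if actO h q.1 i = actO h q.2 ((Move.pos j).act h i) then
            crate d K h σ N V i j q.1 q.2 else 0) := by
      have hc : ∀ a b : Option (Move d), 0 ≤ crate d K h σ N V i j a b := by
        rintro (_ | a) (_ | b)
        · exact le_rfl
        · show (0:ℝ) ≤ if b = Move.neg j then _ else 0
          split
          · linarith
          · exact le_rfl
        · show (0:ℝ) ≤ if a = Move.pos j then _ else 0
          split
          · linarith
          · exact le_rfl
        · simp only [crate]
          split
          · exact le_min (rate_nonneg _ _ _ _ _ _ _ _) (rate_nonneg _ _ _ _ _ _ _ _)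
          · split
            · exact le_max_right _ _
            · split
              · exact le_max_right _ _
              · exact le_rfl
      intro q
      split
      · exact hc q.1 q.2
      · exact le_rfl
    have hsub : ({(some (Move.pos j), (none : Option (Move d))),
        ((none : Option (Move d)), some (Move.neg j))} :
          Finset (Option (Move d) × Option (Move d))) ⊆ Finset.univ :=
      Finset.subset_univ _
    have hpairne : (some (Move.pos j), (none : Option (Move d)))
        ≠ ((none : Option (Move d)), some (Move.neg j)) := by simp
    have hcond1 : actO h (some (Move.pos j)) i = actO h none ((Move.pos j).act h i) := rfl
    have hcond2 : actO h (none : Option (Move d)) i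
        = actO h (some (Move.neg j)) ((Move.pos j).act h i) := by
      simp only [actO]; rw [hcanc]
    calc kplus d K h σ N V i j + kminus d K h σ N V ((Move.pos j).act h i) j
        = ∑ q ∈ ({(some (Move.pos j), (none : Option (Move d))),
            ((none : Option (Move d)), some (Move.neg j))} :
              Finset (Option (Move d) × Option (Move d))),
            (if actO h q.1 i = actO h q.2 ((Move.pos j).act h i) then
              crate d K h σ N V i j q.1 q.2 else 0) := by
          rw [Finset.sum_pair hpairne]
          rw [if_pos hcond1, if_pos hcond2]
          simp [crate]
      _ ≤ ∑ q : Option (Move d) × Option (Move d),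
            (if actO h q.1 i = actO h q.2 ((Move.pos j).act h i) then
              crate d K h σ N V i j q.1 q.2 else 0) :=
          Finset.sum_le_sum_of_subset_of_nonneg hsub (fun q _ _ => hnn q)
  · -- kappaPhi
    unfold kappaPhi
    have hmem : kplus d K h σ N V i j + kminus d K h σ N V ((Move.pos j).act h i) j
        ∈ { r : ℝ | ∃ j : Fin d, ∃ i ∈ grid d K h N, (Move.pos j).act h i ∈ grid d K h N ∧
            r = kplus d K h σ N V i j + kminus d K h σ N V ((Move.pos j).act h i) j } :=
      ⟨j, i, hi, hij, rfl⟩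
    have hbdd : BddBelow { r : ℝ | ∃ j : Fin d, ∃ i ∈ grid d K h N,
        (Move.pos j).act h i ∈ grid d K h N ∧
        r = kplus d K h σ N V i j + kminus d K h σ N V ((Move.pos j).act h i) j } := by
      refine ⟨0, ?_⟩
      rintro r ⟨j', i', hi', hij', rfl⟩
      have h1 := hA3p j' i' hi' hij'
      have h2 := hA3m j' _ hij' (by rw [act_cancel]; exact hi')
      linarith
    exact csInf_le hbdd hmem
end

section
/- Path-coupling generator estimate for neighboring states: assume (A3). Then for every j=1,…,d and every i with i,i+he_j∈𝒦_h, Σ_{γ,γ̄∈G∪{e}} 𝐜(i,i+he_j,γ,γ̄)·(dist(γi, γ̄(i+he_j)) − dist(i, i+he_j)) = −(κ₊(i,j)+κ₋(i+he_j,j))·h ≤ −κ_φ·dist(i, i+he_j). -/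
open scoped BigOperators Classical RealInnerProductSpace
open Finset MeasureTheory

section AuxGD

variable {d : ℕ}

lemma gd_self (x : Pt d) : graphDist x x = 0 := by simp [graphDist]

lemma gd_comm (x y : Pt d) : graphDist x y = graphDist y x := by
  unfold graphDist; exact Finset.sum_congr rfl fun m _ => abs_sub_comm _ _

lemma gd_add (v x y : Pt d) : graphDist (x + v) (y + v) = graphDist x y := by
  unfold graphDist
  refine Finset.sum_congr rfl fun m _ => ?_
  congr 1
  show x m + v m - (y m + v m) = x m - y m
  ring

lemma gd_sub (v x y : Pt d) : graphDist (x - v) (y - v) = graphDist x y := by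
  unfold graphDist
  refine Finset.sum_congr rfl fun m _ => ?_
  congr 1
  show x m - v m - (y m - v m) = x m - y m
  ring

lemma gd_single (x : Pt d) (k : Fin d) (c : ℝ) :
    graphDist x (x + EuclideanSpace.single k c) = |c| := by
  unfold graphDist
  have key : ∀ m, |x m - (x + EuclideanSpace.single k c) m| = if m = k then |c| else 0 := by
    intro m
    have hm : (x + EuclideanSpace.single k c) m = x m + (if m = k then c else 0) := by
      simp [EuclideanSpace.single_apply]
    rw [hm]
    split <;> simp [abs_neg, abs_sub_comm]
  simp [key, apply_ite abs, Finset.sum_ite_eq']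

lemma gd_single_sub (x : Pt d) (k : Fin d) (c : ℝ) :
    graphDist x (x - EuclideanSpace.single k c) = |c| := by
  unfold graphDist
  have key : ∀ m, |x m - (x - EuclideanSpace.single k c) m| = if m = k then |c| else 0 := by
    intro m
    have hm : (x - EuclideanSpace.single k c) m = x m - (if m = k then c else 0) := by
      simp [EuclideanSpace.single_apply]
    rw [hm]
    split <;> simp [abs_neg, abs_sub_comm]
  simp [key, apply_ite abs, Finset.sum_ite_eq']

lemma gd_act (h : ℝ) (x : Pt d) (b : Move d) : graphDist x (b.act h x) = |h| := by
  cases b with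
  | pos k => exact gd_single x k h
  | neg k => exact gd_single_sub x k h

lemma gd_act_both (h : ℝ) (a : Move d) (x y : Pt d) :
    graphDist (a.act h x) (a.act h y) = graphDist x y := by
  cases a with
  | pos k => exact gd_add _ _ _
  | neg k => exact gd_sub _ _ _

lemma act_neg_pos (h : ℝ) (j : Fin d) (x : Pt d) :
    (Move.neg j).act h ((Move.pos j).act h x) = x := by
  show x + EuclideanSpace.single j h - EuclideanSpace.single j h = x
  exact add_sub_cancel_right _ _

end AuxGD

/-- Path-coupling generator estimate for neighboring states. -/
theorem path_coupling_generator_estimate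
    (d : ℕ) (K h σ : ℝ) (N : ℕ) (V : Pt d → ℝ) (hp : Params d K h σ N V)
    (hA3 : A3 d K h σ N V) (j : Fin d) (i : Pt d)
    (hi : i ∈ grid d K h N) (hij : (Move.pos j).act h i ∈ grid d K h N) :
    (∑ γ : Option (Move d), ∑ γb : Option (Move d),
        crate d K h σ N V i j γ γb
          * (graphDist (actO h γ i) (actO h γb ((Move.pos j).act h i))
              - graphDist i ((Move.pos j).act h i)))
      = -(kplus d K h σ N V i j + kminus d K h σ N V ((Move.pos j).act h i) j) * h ∧
    -(kplus d K h σ N V i j + kminus d K h σ N V ((Move.pos j).act h i) j) * h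
      ≤ -(kappaPhi d K h σ N V) * graphDist i ((Move.pos j).act h i) := by
  have hpos : 0 < h := hp.2.2.1
  set i' := (Move.pos j).act h i with hi'def
  have hne : (Move.neg j).act h i' = i := act_neg_pos h j i
  have hgd : graphDist i i' = h := by
    rw [hi'def]
    show graphDist i (i + EuclideanSpace.single j h) = h
    rw [gd_single]
    exact abs_of_pos hpos
  have key : ∀ γ γb : Option (Move d),
      crate d K h σ N V i j γ γb
          * (graphDist (actO h γ i) (actO h γb i') - graphDist i i')
        = (if γ = some (Move.pos j) then
            (if γb = none then -(kplus d K h σ N V i j * h) else 0) else 0)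
          + (if γ = none then
            (if γb = some (Move.neg j) then -(kminus d K h σ N V i' j * h) else 0) else 0) := by
    intro γ γb
    rcases γ with _ | a <;> rcases γb with _ | b
    · simp [crate]
    · by_cases hb : b = Move.neg j
      · subst hb
        simp only [crate, actO, hne, gd_self, hgd, if_pos rfl]
        simp only [if_true, reduceCtorEq, ite_false, ite_true, if_false]
        ring
      · simp [crate, hb]
    · by_cases ha : a = Move.pos j
      · subst ha
        have : Move.act h (Move.pos j) i = i' := rfl
        simp only [crate, actO, this, gd_self, hgd, if_pos rfl]
        simp only [if_true, reduceCtorEq, ite_false, ite_true, if_false]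
        ring
      · simp [crate, ha]
    · have hrhs : ((if (some a : Option (Move d)) = some (Move.pos j) then
            (if (some b : Option (Move d)) = none then -(kplus d K h σ N V i j * h) else 0) else 0)
          + (if (some a : Option (Move d)) = none then
            (if (some b : Option (Move d)) = some (Move.neg j)
              then -(kminus d K h σ N V i' j * h) else 0) else 0)) = 0 := by
        simp
      rw [hrhs]
      by_cases hab : a = b
      · subst hab
        have : graphDist (actO h (some a) i) (actO h (some a) i') = graphDist i i' :=
          gd_act_both h a i i'
        rw [this, sub_self, mul_zero]
      · by_cases h1 : a = Move.pos j ∧ b.dir ≠ j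
        · obtain ⟨ha, _⟩ := h1
          subst ha
          have h2 : actO h (some (Move.pos j)) i = i' := rfl
          have h3 : graphDist i' (actO h (some b) i') = h := by
            show graphDist i' (b.act h i') = h
            rw [gd_act]; exact abs_of_pos hpos
          rw [h2, h3, hgd, sub_self, mul_zero]
        · by_cases h2 : a.dir ≠ j ∧ b = Move.neg j
          · obtain ⟨_, hb⟩ := h2
            subst hb
            have h3 : actO h (some (Move.neg j)) i' = i := hne
            have h4 : graphDist (actO h (some a) i) i = h := by
              show graphDist (a.act h i) i = h
              rw [gd_comm, gd_act]; exact abs_of_pos hpos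
            rw [h3, h4, hgd, sub_self, mul_zero]
          · simp [crate, hab, h1, h2]
  constructor
  · calc (∑ γ : Option (Move d), ∑ γb : Option (Move d),
        crate d K h σ N V i j γ γb
          * (graphDist (actO h γ i) (actO h γb i') - graphDist i i'))
        = ∑ γ : Option (Move d), ∑ γb : Option (Move d),
          ((if γ = some (Move.pos j) then
            (if γb = none then -(kplus d K h σ N V i j * h) else 0) else 0)
          + (if γ = none then
            (if γb = some (Move.neg j) then -(kminus d K h σ N V i' j * h) else 0) else 0)) := by
          exact Finset.sum_congr rfl fun γ _ => Finset.sum_congr rfl fun γb _ => key γ γb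
      _ = -(kplus d K h σ N V i j + kminus d K h σ N V i' j) * h := by
          simp [Finset.sum_add_distrib, Finset.sum_ite_eq']
          ring
  · have hbdd : BddBelow { r : ℝ | ∃ j' : Fin d, ∃ i'' ∈ grid d K h N,
        (Move.pos j').act h i'' ∈ grid d K h N ∧
        r = kplus d K h σ N V i'' j' + kminus d K h σ N V ((Move.pos j').act h i'') j' } := by
      refine ⟨0, ?_⟩
      rintro r ⟨j', i'', hi'', hij'', rfl⟩
      have h1 := hA3.1 j' i'' hi'' hij''
      have h2 := hA3.2 j' ((Move.pos j').act h i'') hij''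
        (by rw [act_neg_pos]; exact hi'')
      linarith
    have hmem : kplus d K h σ N V i j + kminus d K h σ N V i' j ∈
        { r : ℝ | ∃ j' : Fin d, ∃ i'' ∈ grid d K h N,
          (Move.pos j').act h i'' ∈ grid d K h N ∧
          r = kplus d K h σ N V i'' j' + kminus d K h σ N V ((Move.pos j').act h i'') j' } :=
      ⟨j, i, hi, hij, rfl⟩
    have hk : kappaPhi d K h σ N V ≤ kplus d K h σ N V i j + kminus d K h σ N V i' j :=
      csInf_le hbdd hmem
    rw [hgd]
    nlinarith
end

section
/- Abstract discrete Bakry–Emery lemma (Proposition 4.1): let φ:[0,∞)→[0,∞) be continuous and convex, continuously differentiable on (0,∞), let f:𝒦_h→(0,∞), and let λ, C_P > 0 with τλ < 1. Define the entropy production P(g) := 𝒯·(H^φ(g|m_h) − H^φ(πg|m_h)). Assume: (i) 0 ≤ P(π^n f) ≤ C_P·F(π^n f) for all n∈ℕ; (ii) F(π^{n+1} f) − F(π^n f) ≤ −τλ·F(π^n f) for all n∈ℕ; (iii) H^φ(π^n f|m_h) → 0 as n→∞. Then H^φ(π^n f|m_h) ≤ (C_P/λ)·F(f)·e^{−λ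 n τ} for all n∈ℕ. -/
open scoped BigOperators Classical RealInnerProductSpace
open Finset MeasureTheory

/-- Abstract discrete Bakry–Emery lemma (Proposition 4.1). -/
theorem discrete_bakry_emery
    (d : ℕ) (K h σ : ℝ) (N : ℕ) (V : Pt d → ℝ) (hp : Params d K h σ N V)
    (φ : ℝ → ℝ) (hφ : PhiRegular φ)
    (f : Pt d → ℝ) (hf : ∀ i ∈ grid d K h N, 0 < f i)
    (lam CP : ℝ) (hlam : 0 < lam) (hCP : 0 < CP)
    (htl : tauStep d K h σ N V * lam < 1)
    (hyp1 : ∀ n : ℕ,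
      0 ≤ Tcal d K h σ N V *
          (entPhi d K h σ N V φ ((piStep d K h σ N V)^[n] f)
            - entPhi d K h σ N V φ ((piStep d K h σ N V)^[n + 1] f)) ∧
      Tcal d K h σ N V *
          (entPhi d K h σ N V φ ((piStep d K h σ N V)^[n] f)
            - entPhi d K h σ N V φ ((piStep d K h σ N V)^[n + 1] f))
        ≤ CP * fisher d K h σ N V φ ((piStep d K h σ N V)^[n] f))
    (hyp2 : ∀ n : ℕ,
      fisher d K h σ N V φ ((piStep d K h σ N V)^[n + 1] f)
          - fisher d K h σ N V φ ((piStep d K h σ N V)^[n] f)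
        ≤ -(tauStep d K h σ N V * lam) * fisher d K h σ N V φ ((piStep d K h σ N V)^[n] f))
    (hyp3 : Filter.Tendsto
      (fun n : ℕ => entPhi d K h σ N V φ ((piStep d K h σ N V)^[n] f))
      Filter.atTop (nhds 0)) :
    ∀ n : ℕ,
      entPhi d K h σ N V φ ((piStep d K h σ N V)^[n] f)
        ≤ (CP / lam) * fisher d K h σ N V φ f
            * Real.exp (-lam * n * tauStep d K h σ N V) := by
  classical
  set T := Tcal d K h σ N V with hTdef
  set τ := tauStep d K h σ N V with hτdef
  have hτT : τ = 1 / T := by rw [hτdef, hTdef]; rfl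
  let H : ℕ → ℝ := fun n => entPhi d K h σ N V φ ((piStep d K h σ N V)^[n] f)
  let F : ℕ → ℝ := fun n => fisher d K h σ N V φ ((piStep d K h σ N V)^[n] f)
  have h1 : ∀ n : ℕ, 0 ≤ T * (H n - H (n + 1)) ∧ T * (H n - H (n + 1)) ≤ CP * F n :=
    fun n => hyp1 n
  have h2 : ∀ n : ℕ, F (n + 1) - F n ≤ -(τ * lam) * F n := fun n => hyp2 n
  have h3 : Filter.Tendsto H Filter.atTop (nhds 0) := hyp3
  have hFf : fisher d K h σ N V φ f = F 0 := rfl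
  have hF0nn : 0 ≤ F 0 := by
    have := (h1 0).1
    have := (h1 0).2
    nlinarith
  intro n
  show H n ≤ CP / lam * fisher d K h σ N V φ f * Real.exp (-lam * n * τ)
  rw [hFf]
  rcases lt_trichotomy T 0 with hTneg | hT0 | hTpos
  · -- T < 0 : H is nondecreasing with limit 0, so H n ≤ 0 ≤ RHS
    have hmono : ∀ m, H m ≤ H (m + 1) := by
      intro m
      have := (h1 m).1
      nlinarith
    have hchain : ∀ m, H n ≤ H (m + n) := by
      intro m; induction m with
      | zero => simp
      | succ k ih => exact ih.trans (by simpa [Nat.succ_add] using hmono (k + n))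
    have hlim : Filter.Tendsto (fun m => H (m + n)) Filter.atTop (nhds 0) :=
      h3.comp (Filter.tendsto_add_atTop_nat n)
    have hHn : H n ≤ 0 := ge_of_tendsto' hlim hchain
    have : 0 ≤ CP / lam * F 0 * Real.exp (-lam * n * τ) := by
      have h0 : 0 ≤ CP / lam := by positivity
      exact mul_nonneg (mul_nonneg h0 hF0nn) (Real.exp_nonneg _)
    linarith
  · -- T = 0 : the chain is frozen, entropy is constant and hence zero
    have hTc : Tcal d K h σ N V = 0 := by rw [← hTdef]; exact hT0
    have hpr : ∀ (i : Pt d) (γ : Move d), prate d K h σ N V i γ = 0 := by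
      intro i γ; simp [prate, hTc]
    have hstep : piStep d K h σ N V = id := by
      funext g i; simp [piStep, hpr]
    have hiter : ∀ m : ℕ, (piStep d K h σ N V)^[m] f = f := by
      intro m; rw [hstep]; simp
    have hHconst : ∀ m, H m = H 0 := by
      intro m; show entPhi _ _ _ _ _ _ _ _ = entPhi _ _ _ _ _ _ _ _
      rw [hiter m, hiter 0]
    have hH0 : H 0 = 0 := by
      have : Filter.Tendsto H Filter.atTop (nhds (H 0)) := by
        have : H = fun _ => H 0 := funext hHconst
        rw [this]; exact tendsto_const_nhds
      exact tendsto_nhds_unique this h3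
    have hFis : F 0 = 0 := by
      show fisher d K h σ N V φ _ = 0
      simp [fisher, hpr]
    rw [hHconst n, hH0, hFis]
    simp
  · -- T > 0 : the main case
    have hτpos : 0 < τ := by rw [hτT]; positivity
    have hτl : τ * lam < 1 := htl
    set r : ℝ := 1 - τ * lam with hrdef
    have hr0 : 0 ≤ r := by rw [hrdef]; linarith
    have hr1 : r < 1 := by rw [hrdef]; nlinarith
    have hFnn : ∀ m, 0 ≤ F m := by
      intro m
      have := (h1 m).1
      have := (h1 m).2
      nlinarith
    have hFdec : ∀ m, F m ≤ r ^ m * F 0 := by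
      intro m; induction m with
      | zero => simp
      | succ k ih =>
        have hk := h2 k
        have : F (k + 1) ≤ r * F k := by rw [hrdef]; nlinarith
        calc F (k + 1) ≤ r * F k := this
          _ ≤ r * (r ^ k * F 0) := mul_le_mul_of_nonneg_left ih hr0
          _ = r ^ (k + 1) * F 0 := by ring
    have hstep' : ∀ m, H m - H (m + 1) ≤ τ * (CP * F m) := by
      intro m
      have hm := (h1 m).2
      rw [hτT]
      rw [div_mul_eq_mul_div, le_div_iff₀ hTpos, one_mul]
      nlinarith
    have claim : ∀ m, lam * (H n - H (n + m)) ≤ CP * F 0 * r ^ n * (1 - r ^ m) := by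
      intro m; induction m with
      | zero => simp
      | succ k ih =>
        have hA : lam * (H (n + k) - H (n + k + 1)) ≤ lam * (τ * (CP * F (n + k))) :=
          mul_le_mul_of_nonneg_left (hstep' (n + k)) hlam.le
        have hB : lam * (τ * (CP * F (n + k))) ≤ lam * (τ * (CP * (r ^ (n + k) * F 0))) := by
          have hd := hFdec (n + k)
          have hc : 0 ≤ lam * τ * CP := by positivity
          nlinarith
        have hC : lam * (τ * (CP * (r ^ (n + k) * F 0)))
            = CP * F 0 * r ^ n * (1 - r ^ (k + 1)) - CP * F 0 * r ^ n * (1 - r ^ k) := by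
          have htaulam : τ * lam = 1 - r := by rw [hrdef]; ring
          calc lam * (τ * (CP * (r ^ (n + k) * F 0)))
              = (τ * lam) * (CP * (r ^ n * r ^ k * F 0)) := by rw [pow_add]; ring
            _ = (1 - r) * (CP * (r ^ n * r ^ k * F 0)) := by rw [htaulam]
            _ = CP * F 0 * r ^ n * (1 - r ^ (k + 1)) - CP * F 0 * r ^ n * (1 - r ^ k) := by
                rw [pow_succ]; ring
        have hnk : n + (k + 1) = n + k + 1 := rfl
        rw [hnk]
        nlinarith [hA, hB, ih]
    have hbound : ∀ m, lam * H n ≤ lam * H (m + n) + CP * F 0 * r ^ n := by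
      intro m
      have := claim m
      have hrm : 0 ≤ r ^ m := pow_nonneg hr0 m
      have hcc : 0 ≤ CP * F 0 * r ^ n := by positivity
      have : CP * F 0 * r ^ n * (1 - r ^ m) ≤ CP * F 0 * r ^ n := by nlinarith
      have hcomm : H (n + m) = H (m + n) := by rw [Nat.add_comm]
      nlinarith [claim m]
    have hlim : Filter.Tendsto (fun m => lam * H (m + n) + CP * F 0 * r ^ n)
        Filter.atTop (nhds (lam * 0 + CP * F 0 * r ^ n)) := by
      exact ((h3.comp (Filter.tendsto_add_atTop_nat n)).const_mul lam).add tendsto_const_nhds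
    have hkey : lam * H n ≤ CP * F 0 * r ^ n := by
      have := ge_of_tendsto' hlim hbound
      simpa using this
    have hexp : r ^ n ≤ Real.exp (-lam * n * τ) := by
      have h1' : r ≤ Real.exp (-(τ * lam)) := by
        have := Real.add_one_le_exp (-(τ * lam))
        rw [hrdef]; linarith
      have h2' : r ^ n ≤ Real.exp (-(τ * lam)) ^ n := pow_le_pow_left₀ hr0 h1' n
      have h3' : Real.exp (-(τ * lam)) ^ n = Real.exp (-lam * n * τ) := by
        rw [← Real.exp_nat_mul]; ring_nf
      rw [← h3']; exact h2'
    rw [div_mul_eq_mul_div, div_mul_eq_mul_div, le_div_iff₀ hlam]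
    have hcc : 0 ≤ CP * F 0 := by positivity
    nlinarith [mul_le_mul_of_nonneg_left hexp hcc]
end
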